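/- Fix c ∈ K and consider the 2-component equation (new integrable equation (dtmv)): 𝔽¹ = 2u²₋₁·(u¹₀)² − 2c·u¹₀ − 2(u¹₁·u²₀·u¹₀ + u¹₁ − c·u¹₀ − α₀·u¹₀)/(u¹₀·u²₀ + 1), 𝔽² = 2u²₋₁ − 2α₀·u²₀ − 2(u²₀)²·(u¹₁·u²₀·u¹₀ + u¹₁ − c·u¹₀ − α₀·u¹₀)/(u¹₀·u²₀ + 1). Then the matrices M = [[(u¹₀·u²₀·λ + λ + α₀ − c·u¹₀·u²₀)/(u¹₀·u²₀ + 1), (λ − c)·u¹₀],[u²₀, u¹₀·u²₀ + 1]] and U = [[2u¹₀·u²₋₁ − λ, 2(c − λ)·u¹₀],[−2u²₋₁, λ − 2u¹₀·u²₋₁]] form an MLR for this equation: D_t(M) = S(U)·M − M·U. -/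

import Mathlib

open MvPolynomial

/-- Variables: `none` is `λ`; `some (none, ℓ)` is `α_ℓ`; `some (some j, ℓ)` is `u^j_ℓ`. -/
abbrev VarA := Option (Option (Fin 2) × ℤ)

/-- Polynomial ring over `K` in `λ`, `α_ℓ`, `u¹_ℓ`, `u²_ℓ`. -/
abbrev PolyA (K : Type) [Field K] := MvPolynomial VarA K

/-- Field of rational functions over `K` in `λ`, `α_ℓ`, `u¹_ℓ`, `u²_ℓ`. -/
abbrev FA (K : Type) [Field K] := FractionRing (PolyA K)

/-- The spectral parameter `λ`. -/
noncomputable def lam (K : Type) [Field K] : FA K :=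
  algebraMap (PolyA K) (FA K) (X none)

/-- The variable `α_ℓ` (playing the role of `α(n+ℓ)`). -/
noncomputable def al (K : Type) [Field K] (ℓ : ℤ) : FA K :=
  algebraMap (PolyA K) (FA K) (X (some (none, ℓ)))

/-- The variable `u¹_ℓ`. -/
noncomputable def U1 (K : Type) [Field K] (ℓ : ℤ) : FA K :=
  algebraMap (PolyA K) (FA K) (X (some (some 0, ℓ)))

/-- The variable `u²_ℓ`. -/
noncomputable def U2 (K : Type) [Field K] (ℓ : ℤ) : FA K :=
  algebraMap (PolyA K) (FA K) (X (some (some 1, ℓ)))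

/-- `𝔽¹` of equation (dtmv). -/
noncomputable def Feq1 (K : Type) [Field K] (c : K) : FA K :=
  2 * U2 K (-1) * (U1 K 0) ^ 2 - 2 * algebraMap K (FA K) c * U1 K 0 -
    2 * (U1 K 1 * U2 K 0 * U1 K 0 + U1 K 1 - algebraMap K (FA K) c * U1 K 0 -
      al K 0 * U1 K 0) / (U1 K 0 * U2 K 0 + 1)

/-- `𝔽²` of equation (dtmv). -/
noncomputable def Feq2 (K : Type) [Field K] (c : K) : FA K :=
  2 * U2 K (-1) - 2 * al K 0 * U2 K 0 -
    2 * (U2 K 0) ^ 2 * (U1 K 1 * U2 K 0 * U1 K 0 + U1 K 1 - algebraMap K (FA K) c * U1 K 0 -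
      al K 0 * U1 K 0) / (U1 K 0 * U2 K 0 + 1)

/-- The matrix `M` of the MLR for equation (dtmv). -/
noncomputable def Mdtmv (K : Type) [Field K] (c : K) : Matrix (Fin 2) (Fin 2) (FA K) :=
  !![(U1 K 0 * U2 K 0 * lam K + lam K + al K 0 -
        algebraMap K (FA K) c * U1 K 0 * U2 K 0) / (U1 K 0 * U2 K 0 + 1),
      (lam K - algebraMap K (FA K) c) * U1 K 0;
    U2 K 0, U1 K 0 * U2 K 0 + 1]

/-- The matrix `U` of the MLR for equation (dtmv). -/
noncomputable def Udtmv (K : Type) [Field K] (c : K) : Matrix (Fin 2) (Fin 2) (FA K) :=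
  !![2 * U1 K 0 * U2 K (-1) - lam K, 2 * (algebraMap K (FA K) c - lam K) * U1 K 0;
    -(2 * U2 K (-1)), lam K - 2 * U1 K 0 * U2 K (-1)]

set_option maxHeartbeats 3200000

/-- `F` is the field of rational functions over a char-0 field `K` in `λ, α_ℓ, u¹_ℓ, u²_ℓ`;
`S` is the field automorphism over `K` fixing `λ` with `S(α_ℓ) = α_{ℓ+1}`,
`S(u^j_ℓ) = u^j_{ℓ+1}`, and `D_t` is the total derivative of equation (dtmv)
`∂_t u^j = 𝔽^j` (the unique derivation with `D_t(λ) = 0`, `D_t(α_ℓ) = 0`,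
`D_t(u^j_ℓ) = S^ℓ(𝔽^j)`); both are quantified by these characterizing properties.
Claim: the matrices `Mdtmv`, `Udtmv` form an MLR for (dtmv):
`det M ≠ 0` and `D_t(M) = S(U)·M − M·U`. -/
theorem stmt_13 (K : Type) [Field K] [CharZero K] (c : K)
    (S : FA K ≃+* FA K)
    (hSK : ∀ x : K, S (algebraMap K (FA K) x) = algebraMap K (FA K) x)
    (hSlam : S (lam K) = lam K)
    (hSal : ∀ ℓ : ℤ, S (al K ℓ) = al K (ℓ + 1))
    (hSu1 : ∀ ℓ : ℤ, S (U1 K ℓ) = U1 K (ℓ + 1))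
    (hSu2 : ∀ ℓ : ℤ, S (U2 K ℓ) = U2 K (ℓ + 1))
    (Dt : FA K → FA K)
    (hDadd : ∀ x y, Dt (x + y) = Dt x + Dt y)
    (hDmul : ∀ x y, Dt (x * y) = x * Dt y + Dt x * y)
    (hDK : ∀ x : K, Dt (algebraMap K (FA K) x) = 0)
    (hDlam : Dt (lam K) = 0)
    (hDal : ∀ ℓ : ℤ, Dt (al K ℓ) = 0)
    (hDu1 : ∀ ℓ : ℤ, Dt (U1 K ℓ) = (S ^ ℓ) (Feq1 K c))
    (hDu2 : ∀ ℓ : ℤ, Dt (U2 K ℓ) = (S ^ ℓ) (Feq2 K c)) :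
    (Mdtmv K c).det ≠ 0 ∧
    (Mdtmv K c).map Dt = (Udtmv K c).map ⇑S * Mdtmv K c - Mdtmv K c * Udtmv K c := by
  classical
  have inj : Function.Injective (algebraMap (PolyA K) (FA K)) :=
    IsFractionRing.injective _ _
  have hd : U1 K 0 * U2 K 0 + 1 ≠ 0 := by
    have hne : (X (some (some 0, 0)) * X (some (some 1, 0)) + 1 : PolyA K) ≠ 0 := by
      intro h
      have h2 := congrArg (MvPolynomial.eval (fun _ => (0 : K))) h
      simp at h2
    intro h
    apply hne
    apply inj
    rw [RingHom.map_add, RingHom.map_mul, RingHom.map_one, RingHom.map_zero]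
    exact h
  have hla : lam K + al K 0 ≠ 0 := by
    have hne : (X none + X (some (none, 0)) : PolyA K) ≠ 0 := by
      intro h
      have h2 := congrArg (MvPolynomial.eval (fun _ => (1 : K))) h
      simp at h2
    intro h
    apply hne
    apply inj
    rw [RingHom.map_add, RingHom.map_zero]
    exact h
  have hD0 : Dt 0 = 0 := by simpa using hDK 0
  have hD1 : Dt 1 = 0 := by simpa using hDK 1
  have hDneg : ∀ x, Dt (-x) = -Dt x := by
    intro x
    have h := hDadd x (-x)
    rw [add_neg_cancel, hD0] at h
    linear_combination -h
  have hDsub : ∀ x y, Dt (x - y) = Dt x - Dt y := by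
    intro x y
    rw [sub_eq_add_neg, hDadd, hDneg, sub_eq_add_neg]
  have hDdiv : ∀ x y : FA K, y ≠ 0 → Dt (x / y) = (Dt x * y - x * Dt y) / (y * y) := by
    intro x y hy
    have hinv : Dt y⁻¹ = -(Dt y) / (y * y) := by
      have h2 := hDmul y y⁻¹
      rw [mul_inv_cancel₀ hy, hD1] at h2
      rw [eq_div_iff (mul_ne_zero hy hy)]
      linear_combination (-y) * h2 - Dt y * mul_inv_cancel₀ hy
    rw [div_eq_mul_inv, hDmul, hinv]
    field_simp
    ring
  have hF1 : Dt (U1 K 0) = Feq1 K c := by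
    have h := hDu1 0
    simpa using h
  have hF2 : Dt (U2 K 0) = Feq2 K c := by
    have h := hDu2 0
    simpa using h
  have hS1 : S (U1 K 0) = U1 K 1 := by simpa using hSu1 0
  have hS2 : S (U2 K (-1)) = U2 K 0 := by simpa using hSu2 (-1)
  constructor
  · have hdet : (Mdtmv K c).det = lam K + al K 0 := by
      rw [Mdtmv, Matrix.det_fin_two_of]
      field_simp
      ring
    rw [hdet]
    exact hla
  · ext i j
    fin_cases i <;> fin_cases j <;>
      simp only [Mdtmv, Udtmv, Matrix.map_apply, Matrix.sub_apply, Matrix.mul_apply,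
        Fin.sum_univ_two, Fin.isValue, Fin.mk_zero, Fin.mk_one, Matrix.of_apply, Matrix.cons_val', Matrix.cons_val_zero,
        Matrix.cons_val_one, Matrix.head_cons, Matrix.head_fin_const, Matrix.empty_val',
        Matrix.cons_val_fin_one, map_sub, map_add, map_mul, map_neg, map_ofNat,
        hSK, hSlam, hS1, hS2]
    · rw [hDdiv _ _ hd]
      simp only [hDsub, hDadd, hDmul, hDneg, hDlam, hDal, hDK, hF1, hF2, hD1,
        mul_zero, zero_mul, add_zero, zero_add, sub_zero]
      rw [Feq1, Feq2]
      field_simp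
      ring
    · simp only [hDsub, hDadd, hDmul, hDneg, hDlam, hDal, hDK, hF1, hF2, hD1,
        mul_zero, zero_mul, add_zero, zero_add, sub_zero]
      rw [Feq1]
      field_simp
      ring
    · simp only [hDsub, hDadd, hDmul, hDneg, hDlam, hDal, hDK, hF1, hF2, hD1,
        mul_zero, zero_mul, add_zero, zero_add, sub_zero]
      rw [Feq2]
      have hd' : U2 K 0 * U1 K 0 + 1 ≠ 0 := by rwa [mul_comm]
      field_simp
      ring
    · simp only [hDsub, hDadd, hDmul, hDneg, hDlam, hDal, hDK, hF1, hF2, hD1,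
        mul_zero, zero_mul, add_zero, zero_add, sub_zero]
      rw [Feq1, Feq2]
      field_simp
      ring
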